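/- Let (M,d_M) be a metric space. For every positive integer n, every a ∈ ℕ, all even integers m, r with 0 ≤ r < m, and every f : (ℤ/mℤ)^n → M, ∑_{j=1}^n ∫ d_M(f(x + (am+r)e_j), f(x))² dμ(x) ≤ min{r², (m−r)²} · n · E_{ε∈{−1,1}^n} ∫ d_M(f(x+ε), f(x))² dμ(x), where the expectation is over uniform ε ∈ {−1,1}^n. In particular, B(M;n,ℓ) ≤ 1 for every positive integer n and every even positive integer ℓ. -/
import Mathlib


open scoped BigOperators ENNReal
open Filter

noncomputable section

namespace MetricCotypePaper

/-- A point of `(ℤ/mℤ)^n`, parametrized by `Fin m` coordinates (so that summing over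
`Fin n → Fin m` is summing over all of `(ℤ/mℤ)^n` when `m > 0`). -/
def toZMod {m n : ℕ} (x : Fin n → Fin m) : Fin n → ZMod m :=
  fun i => ((x i : ℕ) : ZMod m)

/-- An element of `{-1,0,1}^n ⊆ (ℤ/mℤ)^n`, encoded by `Fin 3`. -/
def eps3 (m : ℕ) {n : ℕ} (ε : Fin n → Fin 3) : Fin n → ZMod m :=
  fun i => ((((ε i : ℕ) : ℤ) - 1 : ℤ) : ZMod m)

/-- An element of `{-1,1}^n ⊆ (ℤ/mℤ)^n`, encoded by `Bool`. -/
def epsPM (m : ℕ) {n : ℕ} (ε : Fin n → Bool) : Fin n → ZMod m :=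
  fun i => if ε i then (1 : ZMod m) else (-1 : ZMod m)

/-- The sign `±1` associated to a boolean. -/
def sgn (b : Bool) : ℝ := if b then 1 else -1

/-- The metric cotype `q` (with exponent `p`) inequality, with constant `Γ`, at parameters
`(n, m)`: for every `f : (ℤ/mℤ)^n → M`,
`∑_j ∫ d(f(x + (m/2)e_j), f(x))^p dμ(x)
   ≤ Γ^p m^p n^{1-p/q} ∫∫ d(f(x+ε), f(x))^p dμ(x) dσ(ε)`,
where `μ` (resp. `σ`) is the uniform probability measure on `(ℤ/mℤ)^n`
(resp. on `{-1,0,1}^n`).  Both sides have been multiplied by `m^n`. -/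
def CotypeIneq (M : Type*) [PseudoMetricSpace M] (p q : ℝ) (n m : ℕ) (Γ : ℝ) : Prop :=
  ∀ f : (Fin n → ZMod m) → M,
    ∑ j : Fin n, ∑ x : Fin n → Fin m,
        dist (f (toZMod x + Pi.single j ((m / 2 : ℕ) : ZMod m))) (f (toZMod x)) ^ p
      ≤ Γ ^ p * (m : ℝ) ^ p * (n : ℝ) ^ (1 - p / q) * ((3 : ℝ) ^ n)⁻¹ *
          ∑ ε : Fin n → Fin 3, ∑ x : Fin n → Fin m,
            dist (f (toZMod x + eps3 m ε)) (f (toZMod x)) ^ p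

/-- `Γ_q^{(p)}(M; n, m)`, as an extended nonnegative real (`∞` if no constant works). -/
def gammaNM (M : Type*) [PseudoMetricSpace M] (p q : ℝ) (n m : ℕ) : ℝ≥0∞ :=
  ⨅ Γ ∈ {Γ : ℝ | 0 < Γ ∧ CotypeIneq M p q n m Γ}, ENNReal.ofReal Γ

/-- `Γ_q^{(p)}(M) = sup_{n ≥ 1} inf {Γ_q^{(p)}(M; n, m) : m even}`. -/
def gamma (M : Type*) [PseudoMetricSpace M] (p q : ℝ) : ℝ≥0∞ :=
  ⨆ n ∈ {n : ℕ | 1 ≤ n}, ⨅ m ∈ {m : ℕ | Even m ∧ 0 < m}, gammaNM M p q n m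

/-- `∑_j ε_j x_j` for a choice of signs `ε ∈ {-1,1}^n`. -/
def radSum {X : Type*} [NormedAddCommGroup X] [NormedSpace ℝ X] {n : ℕ}
    (ε : Fin n → Bool) (x : Fin n → X) : X :=
  ∑ j, sgn (ε j) • x j

/-- The Rademacher cotype `q` inequality with constant `C`:
`E_ε ‖∑_j ε_j x_j‖^q ≥ C^{-q} ∑_j ‖x_j‖^q`. -/
def CotypeRadIneq (X : Type*) [NormedAddCommGroup X] [NormedSpace ℝ X] (q C : ℝ) : Prop :=
  ∀ (n : ℕ) (x : Fin n → X),
    C ^ (-q) * ∑ j, ‖x j‖ ^ q ≤ ((2 : ℝ) ^ n)⁻¹ * ∑ ε : Fin n → Bool, ‖radSum ε x‖ ^ q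

/-- `X` has Rademacher cotype `q`, i.e. `C_q(X) < ∞`. -/
def HasRadCotype (X : Type*) [NormedAddCommGroup X] [NormedSpace ℝ X] (q : ℝ) : Prop :=
  ∃ C : ℝ, 0 < C ∧ CotypeRadIneq X q C

/-- `C_q(X)`, the optimal Rademacher cotype `q` constant (`∞` if there is none). -/
def cotypeConst (X : Type*) [NormedAddCommGroup X] [NormedSpace ℝ X] (q : ℝ) : ℝ≥0∞ :=
  ⨅ C ∈ {C : ℝ | 0 < C ∧ CotypeRadIneq X q C}, ENNReal.ofReal C

/-- The Rademacher type `p` inequality with constant `T`: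
`E_ε ‖∑_j ε_j x_j‖^p ≤ T^p ∑_j ‖x_j‖^p`. -/
def TypeIneq (X : Type*) [NormedAddCommGroup X] [NormedSpace ℝ X] (p T : ℝ) : Prop :=
  ∀ (n : ℕ) (x : Fin n → X),
    ((2 : ℝ) ^ n)⁻¹ * ∑ ε : Fin n → Bool, ‖radSum ε x‖ ^ p ≤ T ^ p * ∑ j, ‖x j‖ ^ p

/-- `X` has nontrivial type: type `p` for some `p > 1`. -/
def NontrivialType (X : Type*) [NormedAddCommGroup X] [NormedSpace ℝ X] : Prop :=
  ∃ p T : ℝ, 1 < p ∧ TypeIneq X p T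

/-- `q_X = inf {q ∈ [2,∞) : C_q(X) < ∞}`, an element of `[2,∞]` (with `inf ∅ = ∞`). -/
def qBanach (X : Type*) [NormedAddCommGroup X] [NormedSpace ℝ X] : ℝ≥0∞ :=
  ⨅ q ∈ {q : ℝ | 2 ≤ q ∧ HasRadCotype X q}, ENNReal.ofReal q

/-- `M` embeds into `N` with distortion at most `D`: there is an injective `f` with
`Lip(f)·Lip(f⁻¹) ≤ D`, i.e. (after rescaling by some `r > 0`)
`r·d(x,y) ≤ d(f(x),f(y)) ≤ D·r·d(x,y)`. -/
def EmbedsWithDistortion (M N : Type*) [PseudoMetricSpace M] [PseudoMetricSpace N]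
    (D : ℝ) : Prop :=
  ∃ (f : M → N) (r : ℝ), 0 < r ∧ ∀ x y : M,
    r * dist x y ≤ dist (f x) (f y) ∧ dist (f x) (f y) ≤ D * (r * dist x y)

/-- `c_N(M) = inf {dist(f) : f : M → N injective}`, as an extended nonnegative real. -/
def cEmbed (M N : Type*) [PseudoMetricSpace M] [PseudoMetricSpace N] : ℝ≥0∞ :=
  ⨅ D ∈ {D : ℝ | EmbedsWithDistortion M N D}, ENNReal.ofReal D

/-- `f` is a uniform embedding: injective, uniformly continuous, with uniformly
continuous inverse. -/
def IsUniformEmbeddingMap {M N : Type*} [PseudoMetricSpace M] [PseudoMetricSpace N]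
    (f : M → N) : Prop :=
  Function.Injective f ∧ UniformContinuous f ∧
    ∀ δ : ℝ, 0 < δ → ∃ ε : ℝ, 0 < ε ∧ ∀ x y : M, dist (f x) (f y) < ε → dist x y < δ

/-- `f` is a coarse embedding. -/
def IsCoarseEmbeddingMap {M N : Type*} [PseudoMetricSpace M] [PseudoMetricSpace N]
    (f : M → N) : Prop :=
  ∃ α β : ℝ → ℝ, Monotone α ∧ Monotone β ∧ Tendsto α atTop atTop ∧
    ∀ x y : M, α (dist x y) ≤ dist (f x) (f y) ∧ dist (f x) (f y) ≤ β (dist x y)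

/-- The grid `[m]_∞^n = {0,1,…,m}^n`, equipped with the `ℓ_∞^n` metric (as a subspace of
`ℤ^n` with the sup metric). -/
abbrev Grid (m n : ℕ) : Type :=
  {x : Fin n → ℤ // ∀ i, x i ∈ Set.Icc (0 : ℤ) (m : ℤ)}

end MetricCotypePaper

namespace MetricCotypePaper

/-- The inequality defining `B(M; n, ℓ)` with constant `B`: for every even `m > 0` and
every `f : (ℤ/mℤ)^n → M`,
`∑_j ∫ d(f(x+ℓe_j), f(x))² dμ ≤ B² ℓ² n · E_{ε ∈ {−1,1}^n} ∫ d(f(x+ε), f(x))² dμ`. -/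
def BIneq (M : Type*) [PseudoMetricSpace M] (n ℓ : ℕ) (B : ℝ) : Prop :=
  ∀ m : ℕ, Even m → 0 < m → ∀ f : (Fin n → ZMod m) → M,
    ∑ j : Fin n, ∑ x : Fin n → Fin m,
        dist (f (toZMod x + Pi.single j ((ℓ : ℕ) : ZMod m))) (f (toZMod x)) ^ 2
      ≤ B ^ 2 * (ℓ : ℝ) ^ 2 * (n : ℝ) * ((2 : ℝ) ^ n)⁻¹ *
          ∑ ε : Fin n → Bool, ∑ x : Fin n → Fin m,
            dist (f (toZMod x + epsPM m ε)) (f (toZMod x)) ^ 2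

/-- `B(M; n, ℓ)`, the infimum of the constants `B > 0` in `BIneq` (`∞` if none). -/
def Bconst (M : Type*) [PseudoMetricSpace M] (n ℓ : ℕ) : ℝ≥0∞ :=
  ⨅ B ∈ {B : ℝ | 0 < B ∧ BIneq M n ℓ B}, ENNReal.ofReal B

end MetricCotypePaper

namespace APrioriAux

open MetricCotypePaper Finset

variable {M : Type*} [MetricSpace M] {n m : ℕ} [NeZero m]

/-- The key quantity `T f c = ∑_y d(f(y+c), f(y))²`. -/
def T (f : (Fin n → ZMod m) → M) (c : Fin n → ZMod m) : ℝ :=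
  ∑ y : Fin n → ZMod m, dist (f (y + c)) (f y) ^ 2

lemma sum_translate (g : (Fin n → ZMod m) → ℝ) (c : Fin n → ZMod m) :
    ∑ y : Fin n → ZMod m, g (y + c) = ∑ y, g y :=
  Fintype.sum_equiv (Equiv.addRight c) _ _ (fun _ => rfl)

lemma T_nonneg (f : (Fin n → ZMod m) → M) (c : Fin n → ZMod m) : 0 ≤ T f c :=
  Finset.sum_nonneg fun _ _ => sq_nonneg _

lemma T_neg (f : (Fin n → ZMod m) → M) (c : Fin n → ZMod m) : T f (-c) = T f c := by
  have h := sum_translate (fun y => dist (f (y + -c)) (f y) ^ 2) c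
  simp only [add_neg_cancel_right] at h
  rw [T, ← h, T]
  exact Finset.sum_congr rfl fun y _ => by rw [dist_comm]

lemma T_add_le (f : (Fin n → ZMod m) → M) (a b : Fin n → ZMod m) :
    T f (a + b) ≤ 2 * T f a + 2 * T f b := by
  have key : ∀ y : Fin n → ZMod m, dist (f (y + (a + b))) (f y) ^ 2 ≤
      2 * dist (f (y + a + b)) (f (y + a)) ^ 2 + 2 * dist (f (y + a)) (f y) ^ 2 := by
    intro y
    have h1 : dist (f (y + (a + b))) (f y) ≤
        dist (f (y + a + b)) (f (y + a)) + dist (f (y + a)) (f y) := by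
      rw [add_assoc]; exact dist_triangle _ _ _
    nlinarith [dist_nonneg (x := f (y + (a+b))) (y := f y),
      dist_nonneg (x := f (y + a + b)) (y := f (y + a)),
      dist_nonneg (x := f (y + a)) (y := f y),
      sq_nonneg (dist (f (y + a + b)) (f (y + a)) - dist (f (y + a)) (f y))]
  calc T f (a + b) ≤ ∑ y : Fin n → ZMod m,
        (2 * dist (f (y + a + b)) (f (y + a)) ^ 2 + 2 * dist (f (y + a)) (f y) ^ 2) :=
        Finset.sum_le_sum fun y _ => key y
    _ = 2 * T f b + 2 * T f a := by
        rw [Finset.sum_add_distrib, ← Finset.mul_sum, ← Finset.mul_sum]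
        congr 1
        · congr 1
          have := sum_translate (fun y => dist (f (y + b)) (f y) ^ 2) a
          rw [T, ← this]
    _ ≤ 2 * T f a + 2 * T f b := by linarith

lemma T_nsmul_le (f : (Fin n → ZMod m) → M) (c : Fin n → ZMod m) (k : ℕ) :
    T f (k • c) ≤ (k : ℝ) ^ 2 * T f c := by
  have key : ∀ y : Fin n → ZMod m, dist (f (y + k • c)) (f y) ^ 2 ≤
      (k : ℝ) * ∑ i ∈ range k, dist (f (y + (i + 1) • c)) (f (y + i • c)) ^ 2 := by
    intro y
    have h1 : dist (f (y + 0 • c)) (f (y + k • c)) ≤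
        ∑ i ∈ range k, dist (f (y + i • c)) (f (y + (i + 1) • c)) :=
      dist_le_range_sum_dist (fun i => f (y + i • c)) k
    simp only [zero_smul, add_zero] at h1
    have h2 : dist (f (y + k • c)) (f y) ≤
        ∑ i ∈ range k, dist (f (y + (i + 1) • c)) (f (y + i • c)) := by
      rw [dist_comm]
      refine h1.trans (le_of_eq (Finset.sum_congr rfl fun i _ => dist_comm _ _))
    have h3 : (∑ i ∈ range k, dist (f (y + (i + 1) • c)) (f (y + i • c))) ^ 2 ≤
        (k : ℝ) * ∑ i ∈ range k, dist (f (y + (i + 1) • c)) (f (y + i • c)) ^ 2 := by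
      have := sq_sum_le_card_mul_sum_sq
        (s := range k) (f := fun i => dist (f (y + (i + 1) • c)) (f (y + i • c)))
      simpa using this
    refine le_trans ?_ h3
    have hnn : (0:ℝ) ≤ ∑ i ∈ range k, dist (f (y + (i + 1) • c)) (f (y + i • c)) :=
      Finset.sum_nonneg fun _ _ => dist_nonneg
    exact pow_le_pow_left₀ dist_nonneg h2 2
  calc T f (k • c) ≤ ∑ y : Fin n → ZMod m,
        (k : ℝ) * ∑ i ∈ range k, dist (f (y + (i + 1) • c)) (f (y + i • c)) ^ 2 :=
        Finset.sum_le_sum fun y _ => key y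
    _ = (k : ℝ) * ∑ i ∈ range k, ∑ y : Fin n → ZMod m,
          dist (f (y + (i + 1) • c)) (f (y + i • c)) ^ 2 := by
        rw [← Finset.mul_sum, Finset.sum_comm]
    _ = (k : ℝ) * ∑ i ∈ range k, T f c := by
        congr 1
        refine Finset.sum_congr rfl fun i _ => ?_
        have := sum_translate (fun y => dist (f (y + c)) (f y) ^ 2) (i • c)
        rw [T, ← this]
        refine Finset.sum_congr rfl fun y _ => ?_
        congr 2
        rw [succ_nsmul, ← add_assoc]
    _ = (k : ℝ) ^ 2 * T f c := by
        rw [Finset.sum_const, card_range, nsmul_eq_mul]; ring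

lemma T_two_le (f : (Fin n → ZMod m) → M) (j : Fin n) :
    T f (Pi.single j (2 : ZMod m)) ≤
      4 * ((2 : ℝ) ^ n)⁻¹ * ∑ ε : Fin n → Bool, T f (epsPM m ε) := by
  set c2 : Fin n → ZMod m := Pi.single j (2 : ZMod m) with hc2
  set Φ : (Fin n → Bool) → (Fin n → Bool) := fun η i => if i = j then η j else !(η i) with hΦ
  have hinv : Function.Involutive Φ := by
    intro η; funext i
    by_cases h : i = j <;> simp [hΦ, h]
  have hsum : ∀ η : Fin n → Bool,
      epsPM m η + epsPM m (Φ η) = if η j then c2 else -c2 := by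
    intro η
    funext i
    simp only [Pi.add_apply, epsPM, hΦ]
    by_cases h : i = j
    · subst h
      by_cases hb : η i <;>
        simp [hb, hc2, Pi.single_eq_same] <;> ring
    · by_cases hj : η j <;> by_cases hb : η i <;>
        simp [h, hb, hj, hc2, Pi.single_eq_of_ne h]
  have hT : ∀ η : Fin n → Bool, T f c2 ≤ 2 * T f (epsPM m η) + 2 * T f (epsPM m (Φ η)) := by
    intro η
    have h := T_add_le f (epsPM m η) (epsPM m (Φ η))
    rw [hsum η] at h
    by_cases hb : η j
    · simpa [hb] using h
    · rw [if_neg hb, T_neg] at h; exact h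
  have h2n : (2 : ℝ) ^ n * T f c2 ≤
      ∑ η : Fin n → Bool, (2 * T f (epsPM m η) + 2 * T f (epsPM m (Φ η))) := by
    have := Finset.sum_le_sum (s := (univ : Finset (Fin n → Bool)))
      (fun η _ => hT η)
    simpa [Finset.sum_const, Finset.card_univ, mul_comm] using this
  have hbij : ∑ η : Fin n → Bool, T f (epsPM m (Φ η)) = ∑ η : Fin n → Bool, T f (epsPM m η) :=
    Function.Bijective.sum_comp hinv.bijective (fun η => T f (epsPM m η))
  rw [Finset.sum_add_distrib, ← Finset.mul_sum, ← Finset.mul_sum, hbij] at h2n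
  have hpos : (0:ℝ) < (2:ℝ) ^ n := by positivity
  rw [mul_comm, ← le_div_iff₀ hpos] at h2n
  calc T f c2 ≤ (2 * ∑ η : Fin n → Bool, T f (epsPM m η) +
        2 * ∑ η : Fin n → Bool, T f (epsPM m η)) / (2:ℝ) ^ n := h2n
    _ = 4 * ((2 : ℝ) ^ n)⁻¹ * ∑ ε : Fin n → Bool, T f (epsPM m ε) := by
        field_simp; ring

set_option maxHeartbeats 1000000 in
lemma T_single_even_le (f : (Fin n → ZMod m) → M) (j : Fin n) (s : ℕ) (hs : Even s) :
    T f (Pi.single j ((s : ℕ) : ZMod m)) ≤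
      (s : ℝ) ^ 2 * (((2 : ℝ) ^ n)⁻¹ * ∑ ε : Fin n → Bool, T f (epsPM m ε)) := by
  obtain ⟨t, ht⟩ := hs
  have h1 := T_nsmul_le f (Pi.single j (2 : ZMod m)) t
  have h2 := T_two_le f j
  have hcast : (s : ℝ) = 2 * (t : ℝ) := by rw [ht]; push_cast; ring
  have ht2 : (0:ℝ) ≤ (t:ℝ)^2 := sq_nonneg _
  have hsingle : T f (Pi.single j ((s : ℕ) : ZMod m)) = T f (t • Pi.single j (2 : ZMod m)) := by
    congr 1
    funext i
    by_cases h : i = j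
    · subst h
      simp only [Pi.smul_apply, Pi.single_eq_same, ht]
      push_cast
      rw [nsmul_eq_mul]
      ring
    · simp [Pi.single_eq_of_ne h]
  rw [hsingle]
  refine h1.trans ?_
  refine (mul_le_mul_of_nonneg_left h2 ht2).trans_eq ?_
  rw [hcast]; ring

lemma toZMod_bijective (hn : True) : Function.Bijective (toZMod : (Fin n → Fin m) → (Fin n → ZMod m)) := by
  rw [Fintype.bijective_iff_injective_and_card]
  constructor
  · intro x y h
    funext i
    have hi : ((x i : ℕ) : ZMod m) = ((y i : ℕ) : ZMod m) := congrFun h i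
    apply Fin.ext
    rw [← ZMod.val_cast_of_lt (x i).isLt, ← ZMod.val_cast_of_lt (y i).isLt, hi]
  · simp [ZMod.card]

lemma sum_toZMod (g : (Fin n → ZMod m) → ℝ) :
    ∑ x : Fin n → Fin m, g (toZMod x) = ∑ y : Fin n → ZMod m, g y :=
  Function.Bijective.sum_comp (toZMod_bijective trivial) g

end APrioriAux

open MetricCotypePaper in
/-- **Lemma 6.1.**  For every metric space `M`, `n ≥ 1`, `a ∈ ℕ`, even `m, r` with
`0 ≤ r < m`, and every `f : (ℤ/mℤ)^n → M`,
`∑_j ∫ d(f(x + (am+r)e_j), f(x))² dμ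
  ≤ min{r², (m−r)²}·n·E_{ε ∈ {−1,1}^n} ∫ d(f(x+ε), f(x))² dμ`.
In particular, `B(M; n, ℓ) ≤ 1` for every `n ≥ 1` and every even `ℓ > 0`. -/
theorem a_priori_bound (M : Type*) [MetricSpace M] :
    (∀ n : ℕ, 1 ≤ n → ∀ a m r : ℕ, Even m → 0 < m → Even r → r < m →
      ∀ f : (Fin n → ZMod m) → M,
        ∑ j : Fin n, ∑ x : Fin n → Fin m,
            dist (f (toZMod x + Pi.single j ((a * m + r : ℕ) : ZMod m))) (f (toZMod x)) ^ 2
          ≤ min ((r : ℝ) ^ 2) (((m : ℝ) - (r : ℝ)) ^ 2) * (n : ℝ) * ((2 : ℝ) ^ n)⁻¹ *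
              ∑ ε : Fin n → Bool, ∑ x : Fin n → Fin m,
                dist (f (toZMod x + epsPM m ε)) (f (toZMod x)) ^ 2) ∧
    (∀ n ℓ : ℕ, 1 ≤ n → 0 < ℓ → Even ℓ → Bconst M n ℓ ≤ 1) := by
  have main : ∀ n : ℕ, 1 ≤ n → ∀ a m r : ℕ, Even m → 0 < m → Even r → r < m →
      ∀ f : (Fin n → ZMod m) → M,
        ∑ j : Fin n, ∑ x : Fin n → Fin m,
            dist (f (toZMod x + Pi.single j ((a * m + r : ℕ) : ZMod m))) (f (toZMod x)) ^ 2
          ≤ min ((r : ℝ) ^ 2) (((m : ℝ) - (r : ℝ)) ^ 2) * (n : ℝ) * ((2 : ℝ) ^ n)⁻¹ *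
              ∑ ε : Fin n → Bool, ∑ x : Fin n → Fin m,
                dist (f (toZMod x + epsPM m ε)) (f (toZMod x)) ^ 2 := by
    intro n hn a m r hm hm0 hr hrm f
    haveI : NeZero m := ⟨hm0.ne'⟩
    have hL : ∀ c : Fin n → ZMod m,
        ∑ x : Fin n → Fin m, dist (f (toZMod x + c)) (f (toZMod x)) ^ 2 = APrioriAux.T f c :=
      fun c => APrioriAux.sum_toZMod (fun y => dist (f (y + c)) (f y) ^ 2)
    simp only [hL]
    set Sg := ∑ ε : Fin n → Bool, APrioriAux.T f (epsPM m ε) with hSg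
    have hSgnn : (0:ℝ) ≤ Sg := Finset.sum_nonneg fun _ _ => APrioriAux.T_nonneg f _
    have hinvnn : (0:ℝ) ≤ ((2:ℝ) ^ n)⁻¹ := by positivity
    have hcast : ((a * m + r : ℕ) : ZMod m) = ((r : ℕ) : ZMod m) := by
      push_cast [ZMod.natCast_self]
      ring
    have hb1 : ∀ j : Fin n, APrioriAux.T f (Pi.single j ((a * m + r : ℕ) : ZMod m)) ≤
        (r : ℝ) ^ 2 * (((2:ℝ) ^ n)⁻¹ * Sg) := by
      intro j
      rw [hcast]
      exact APrioriAux.T_single_even_le f j r hr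
    have hneg : ((r : ℕ) : ZMod m) = -(((m - r : ℕ) : ZMod m)) := by
      apply eq_neg_of_add_eq_zero_right
      rw [← Nat.cast_add, Nat.sub_add_cancel hrm.le, ZMod.natCast_self]
    have hmr_even : Even (m - r) := (Nat.even_sub hrm.le).mpr (by simp [hm, hr])
    have hb2 : ∀ j : Fin n, APrioriAux.T f (Pi.single j ((a * m + r : ℕ) : ZMod m)) ≤
        ((m : ℝ) - (r : ℝ)) ^ 2 * (((2:ℝ) ^ n)⁻¹ * Sg) := by
      intro j
      have hsingleneg : (Pi.single j ((r : ℕ) : ZMod m) : Fin n → ZMod m)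
          = -(Pi.single j ((m - r : ℕ) : ZMod m) : Fin n → ZMod m) := by
        funext i
        by_cases h : i = j
        · subst h
          simp [Pi.single_eq_same, hneg]
        · simp [Pi.single_eq_of_ne h]
      rw [hcast, hsingleneg, APrioriAux.T_neg]
      have h := APrioriAux.T_single_even_le f j (m - r) hmr_even
      have hc : ((m - r : ℕ) : ℝ) = (m : ℝ) - (r : ℝ) := Nat.cast_sub hrm.le
      rw [hc] at h
      exact h
    have hmin : ∀ j : Fin n, APrioriAux.T f (Pi.single j ((a * m + r : ℕ) : ZMod m)) ≤
        min ((r : ℝ) ^ 2) (((m : ℝ) - (r : ℝ)) ^ 2) * (((2:ℝ) ^ n)⁻¹ * Sg) := by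
      intro j
      rcases min_cases ((r : ℝ) ^ 2) (((m : ℝ) - (r : ℝ)) ^ 2) with ⟨h, _⟩ | ⟨h, _⟩ <;> rw [h]
      · exact hb1 j
      · exact hb2 j
    calc ∑ j : Fin n, APrioriAux.T f (Pi.single j ((a * m + r : ℕ) : ZMod m))
        ≤ ∑ _j : Fin n, min ((r : ℝ) ^ 2) (((m : ℝ) - (r : ℝ)) ^ 2) * (((2:ℝ) ^ n)⁻¹ * Sg) :=
          Finset.sum_le_sum fun j _ => hmin j
      _ = (n : ℝ) * (min ((r : ℝ) ^ 2) (((m : ℝ) - (r : ℝ)) ^ 2) * (((2:ℝ) ^ n)⁻¹ * Sg)) := by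
          rw [Finset.sum_const, Finset.card_univ, Fintype.card_fin, nsmul_eq_mul]
      _ = min ((r : ℝ) ^ 2) (((m : ℝ) - (r : ℝ)) ^ 2) * (n : ℝ) * ((2:ℝ) ^ n)⁻¹ * Sg := by
          ring
  refine ⟨main, ?_⟩
  intro n ℓ hn hℓ hev
  have hB : BIneq M n ℓ 1 := by
    intro m hm hm0 f
    haveI : NeZero m := ⟨hm0.ne'⟩
    have hdecomp : ℓ / m * m + ℓ % m = ℓ := Nat.div_add_mod' ℓ m
    have hr_even : Even (ℓ % m) := by
      rw [Nat.even_iff, Nat.mod_mod_of_dvd ℓ hm.two_dvd, ← Nat.even_iff]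
      exact hev
    have hrm : ℓ % m < m := Nat.mod_lt ℓ hm0
    have H := main n hn (ℓ / m) m (ℓ % m) hm hm0 hr_even hrm f
    have hz : ((ℓ : ℕ) : ZMod m) = ((ℓ / m * m + ℓ % m : ℕ) : ZMod m) := by rw [hdecomp]
    simp only [hz]
    refine H.trans ?_
    have hSnn : (0:ℝ) ≤ ∑ ε : Fin n → Bool, ∑ x : Fin n → Fin m,
        dist (f (toZMod x + epsPM m ε)) (f (toZMod x)) ^ 2 :=
      Finset.sum_nonneg fun _ _ => Finset.sum_nonneg fun _ _ => sq_nonneg _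
    have hminle' : min (((ℓ % m : ℕ) : ℝ) ^ 2) (((m : ℝ) - ((ℓ % m : ℕ) : ℝ)) ^ 2)
        ≤ (1:ℝ) ^ 2 * (ℓ : ℝ) ^ 2 := by
      rw [one_pow, one_mul]
      refine (min_le_left _ _).trans ?_
      have hle : ((ℓ % m : ℕ) : ℝ) ≤ (ℓ : ℝ) := Nat.cast_le.mpr (Nat.mod_le ℓ m)
      exact pow_le_pow_left₀ (Nat.cast_nonneg _) hle 2
    have hninv : (0:ℝ) ≤ (n : ℝ) * ((2:ℝ) ^ n)⁻¹ := by positivity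
    calc min (((ℓ % m : ℕ) : ℝ) ^ 2) (((m : ℝ) - ((ℓ % m : ℕ) : ℝ)) ^ 2) * (n : ℝ) *
          ((2:ℝ) ^ n)⁻¹ * ∑ ε : Fin n → Bool, ∑ x : Fin n → Fin m,
            dist (f (toZMod x + epsPM m ε)) (f (toZMod x)) ^ 2
        ≤ (1:ℝ) ^ 2 * (ℓ : ℝ) ^ 2 * (n : ℝ) * ((2:ℝ) ^ n)⁻¹ *
          ∑ ε : Fin n → Bool, ∑ x : Fin n → Fin m,
            dist (f (toZMod x + epsPM m ε)) (f (toZMod x)) ^ 2 := by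
          have := mul_le_mul_of_nonneg_right
            (mul_le_mul_of_nonneg_right hminle' hninv) hSnn
          calc _ = min (((ℓ % m : ℕ) : ℝ) ^ 2) (((m : ℝ) - ((ℓ % m : ℕ) : ℝ)) ^ 2) *
                ((n : ℝ) * ((2:ℝ) ^ n)⁻¹) * ∑ ε : Fin n → Bool, ∑ x : Fin n → Fin m,
                dist (f (toZMod x + epsPM m ε)) (f (toZMod x)) ^ 2 := by ring
            _ ≤ (1:ℝ) ^ 2 * (ℓ : ℝ) ^ 2 * ((n : ℝ) * ((2:ℝ) ^ n)⁻¹) *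
                ∑ ε : Fin n → Bool, ∑ x : Fin n → Fin m,
                dist (f (toZMod x + epsPM m ε)) (f (toZMod x)) ^ 2 := this
            _ = _ := by ring
      _ = _ := by norm_num
  have hmem : (1:ℝ) ∈ {B : ℝ | 0 < B ∧ BIneq M n ℓ B} := ⟨one_pos, hB⟩
  calc Bconst M n ℓ ≤ ENNReal.ofReal 1 := iInf₂_le (1:ℝ) hmem
    _ = 1 := ENNReal.ofReal_one
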